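/- The j-invariant of the elliptic curve E_6(t): y^2 + (t+1)xy + (t - t^2)y = x^3 + (t - t^2)x^2 over Q(t) equals (3t - 1)^3 (3t^3 - 3t^2 + 9t - 1)^3 / ((t - 1)^3 t^6 (9t - 1)). -/
import Mathlib


open WeierstrassCurve

/-- The elliptic curve `E₆(t) : y² + (t+1)xy + (t-t²)y = x³ + (t-t²)x²` over `ℚ(t)`. -/
noncomputable def E6 : WeierstrassCurve (RatFunc ℚ) :=
  { a₁ := RatFunc.X + 1
    a₂ := RatFunc.X - (RatFunc.X) ^ 2
    a₃ := RatFunc.X - (RatFunc.X) ^ 2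
    a₄ := 0
    a₆ := 0 }

lemma ratfunc_poly_ne_zero {p : Polynomial ℚ} (hp : p ≠ 0) :
    algebraMap (Polynomial ℚ) (RatFunc ℚ) p ≠ 0 :=
  RatFunc.algebraMap_ne_zero hp

/-- The j-invariant `c₄³/Δ` of the elliptic curve
`E₆(t) : y² + (t+1)xy + (t-t²)y = x³ + (t-t²)x²` over `ℚ(t)` equals
`(3t - 1)³ (3t³ - 3t² + 9t - 1)³ / ((t - 1)³ t⁶ (9t - 1))`.  (In particular the
discriminant is nonzero, so `E₆(t)` is indeed an elliptic curve over `ℚ(t)`.) -/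
theorem E6_j_invariant :
    E6.Δ ≠ 0 ∧
    E6.c₄ ^ 3 / E6.Δ =
      (3 * RatFunc.X - 1) ^ 3 *
          (3 * (RatFunc.X) ^ 3 - 3 * (RatFunc.X) ^ 2 + 9 * RatFunc.X - 1) ^ 3 /
        ((RatFunc.X - 1) ^ 3 * (RatFunc.X) ^ 6 * (9 * RatFunc.X - 1)) := by
  have hΔ : E6.Δ =
      (RatFunc.X - 1) ^ 3 * (RatFunc.X) ^ 6 * (9 * RatFunc.X - 1) := by
    simp only [E6, WeierstrassCurve.Δ, WeierstrassCurve.b₂, WeierstrassCurve.b₄,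
      WeierstrassCurve.b₆, WeierstrassCurve.b₈]
    ring
  have hc : E6.c₄ ^ 3 =
      (3 * RatFunc.X - 1) ^ 3 *
        (3 * (RatFunc.X) ^ 3 - 3 * (RatFunc.X) ^ 2 + 9 * RatFunc.X - 1) ^ 3 := by
    simp only [E6, WeierstrassCurve.c₄, WeierstrassCurve.b₂, WeierstrassCurve.b₄]
    ring
  have h1 : (RatFunc.X - 1 : RatFunc ℚ) ≠ 0 := by
    have : ((RatFunc.X - 1 : RatFunc ℚ)) =
        algebraMap (Polynomial ℚ) (RatFunc ℚ) (Polynomial.X - 1) := by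
      simp [RatFunc.algebraMap_X, map_ofNat]
    rw [this]
    exact ratfunc_poly_ne_zero (by
      intro h
      have := congrArg (Polynomial.eval 2) h
      norm_num at this)
  have h2 : (RatFunc.X : RatFunc ℚ) ≠ 0 := RatFunc.X_ne_zero
  have h3 : (9 * RatFunc.X - 1 : RatFunc ℚ) ≠ 0 := by
    have : ((9 * RatFunc.X - 1 : RatFunc ℚ)) =
        algebraMap (Polynomial ℚ) (RatFunc ℚ) (9 * Polynomial.X - 1) := by
      simp [RatFunc.algebraMap_X, map_ofNat]
    rw [this]
    exact ratfunc_poly_ne_zero (by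
      intro h
      have := congrArg (Polynomial.eval 1) h
      norm_num at this)
  have hΔne : E6.Δ ≠ 0 := by
    rw [hΔ]
    exact mul_ne_zero (mul_ne_zero (pow_ne_zero _ h1) (pow_ne_zero _ h2)) h3
  exact ⟨hΔne, by rw [hc, hΔ]⟩
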